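/- Let R = ℤ[s, s⁻¹, t, t⁻¹] and let d₁ : R⁴ → R be the R-linear map with d₁(b₁) = d₁(b₂) = 1 − s and d₁(b₃) = d₁(b₄) = 1 − t. Then ker d₁ is the free R-module with basis {b₁ − b₂, (1 − t)·b₂ + (s − 1)·b₃, b₃ − b₄}. -/

import Mathlib

/-- `R = ℤ[s,s⁻¹,t,t⁻¹]`, the group ring of the free abelian group with basis `{s, t}`. -/
noncomputable abbrev GroupRingZ2 : Type := AddMonoidAlgebra ℤ (ℤ × ℤ)

/-- The generator `s` of the group ring. -/
noncomputable def sGen : GroupRingZ2 := AddMonoidAlgebra.single (1, 0) 1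

/-- The generator `t` of the group ring. -/
noncomputable def tGen : GroupRingZ2 := AddMonoidAlgebra.single (0, 1) 1

/-- The `R`-linear map `Rⁱ → R` sending the `k`-th standard basis vector to `c k`. -/
noncomputable def rowMap {R : Type*} [CommRing R] {ι : Type*} [Fintype ι] (c : ι → R) :
    (ι → R) →ₗ[R] R where
  toFun x := ∑ k, x k * c k
  map_add' x y := by simp [add_mul, Finset.sum_add_distrib]
  map_smul' r x := by simp [Finset.mul_sum, mul_assoc]

/-- The claimed basis of the kernel of the first differential for type `F₄`:
`b₁ − b₂`, `(1 − t)·b₂ + (s − 1)·b₃`, `b₃ − b₄`. -/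
noncomputable def kerBasisF4 : Fin 3 → (Fin 4 → GroupRingZ2) :=
  ![(Pi.single 0 1 : Fin 4 → GroupRingZ2) - (Pi.single 1 1 : Fin 4 → GroupRingZ2),
    (1 - tGen) • (Pi.single 1 1 : Fin 4 → GroupRingZ2) +
      (sGen - 1) • (Pi.single 2 1 : Fin 4 → GroupRingZ2),
    (Pi.single 2 1 : Fin 4 → GroupRingZ2) - (Pi.single 3 1 : Fin 4 → GroupRingZ2)]

lemma one_sub_sGen_ne : (1 : GroupRingZ2) - sGen ≠ 0 := by
  intro h
  have h1 := sub_eq_zero.mp h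
  rw [AddMonoidAlgebra.one_def, sGen] at h1
  have := AddMonoidAlgebra.single_inj.mp h1
  simp [Prod.ext_iff] at this

lemma one_sub_tGen_ne : (1 : GroupRingZ2) - tGen ≠ 0 := by
  intro h
  have h1 := sub_eq_zero.mp h
  rw [AddMonoidAlgebra.one_def, tGen] at h1
  have := AddMonoidAlgebra.single_inj.mp h1
  simp [Prod.ext_iff] at this

lemma single_mul_one (a b : ℤ × ℤ) :
    (AddMonoidAlgebra.single a 1 : GroupRingZ2) * AddMonoidAlgebra.single b 1
      = AddMonoidAlgebra.single (a + b) 1 := by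
  simp [AddMonoidAlgebra.single_mul_single]

lemma tpow_dvd_nat (n : ℕ) :
    (1 - tGen) ∣ (AddMonoidAlgebra.single ((0 : ℤ), (n : ℤ)) 1 - 1 : GroupRingZ2) := by
  induction n with
  | zero =>
    simp [AddMonoidAlgebra.one_def]
    rw [show ((0:ℤ), (0:ℤ)) = (0 : ℤ × ℤ) from rfl, sub_self]
    exact dvd_zero _
  | succ n ih =>
    have e : ((0:ℤ),(1:ℤ)) + ((0:ℤ),(n:ℤ)) = ((0:ℤ), ((n+1 : ℕ):ℤ)) := by
      simp [Prod.ext_iff]; ring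
    have key : (AddMonoidAlgebra.single ((0:ℤ), ((n+1:ℕ) : ℤ)) 1 : GroupRingZ2) - 1
        = tGen * (AddMonoidAlgebra.single ((0:ℤ), (n:ℤ)) 1 - 1) - (1 - tGen) := by
      rw [mul_sub, mul_one, tGen, single_mul_one, e]; ring
    rw [key]
    exact dvd_sub (ih.mul_left _) dvd_rfl

lemma tpow_dvd (n : ℤ) :
    (1 - tGen) ∣ (AddMonoidAlgebra.single ((0 : ℤ), n) 1 - 1 : GroupRingZ2) := by
  obtain ⟨m, rfl | rfl⟩ := n.eq_nat_or_neg
  · exact tpow_dvd_nat m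
  · have e : ((0:ℤ), -(m:ℤ)) + ((0:ℤ), (m:ℤ)) = (0 : ℤ × ℤ) := by simp [Prod.ext_iff]
    have key : (AddMonoidAlgebra.single ((0:ℤ), -(m:ℤ)) 1 : GroupRingZ2) - 1
        = -(AddMonoidAlgebra.single ((0:ℤ), -(m:ℤ)) 1 *
            (AddMonoidAlgebra.single ((0:ℤ), (m:ℤ)) 1 - 1)) := by
      rw [mul_sub, mul_one, single_mul_one, e, ← AddMonoidAlgebra.one_def]; ring
    rw [key]
    exact dvd_neg.mpr ((tpow_dvd_nat m).mul_left _)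

noncomputable def tproj : ℤ × ℤ →+ ℤ × ℤ :=
  { toFun := fun p => (p.1, 0), map_zero' := rfl,
    map_add' := by intro a b; simp [Prod.ext_iff] }

noncomputable def tau : GroupRingZ2 →+* GroupRingZ2 :=
  AddMonoidAlgebra.mapDomainRingHom ℤ tproj

lemma tau_single (p : ℤ × ℤ) (c : ℤ) :
    tau (AddMonoidAlgebra.single p c) = AddMonoidAlgebra.single (p.1, 0) c := by
  simp [tau, AddMonoidAlgebra.mapDomainRingHom, tproj]

lemma dvd_sub_tau (a : GroupRingZ2) : (1 - tGen) ∣ (a - tau a) := by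
  induction a using AddMonoidAlgebra.induction_on with
  | of g =>
    rw [AddMonoidAlgebra.of_apply, tau_single]
    simp only [toAdd_ofAdd]
    have e : g = (g.1, 0) + ((0:ℤ), g.2) := by simp [Prod.ext_iff]
    have key : (AddMonoidAlgebra.single g 1 : GroupRingZ2) - AddMonoidAlgebra.single (g.1, 0) 1
        = AddMonoidAlgebra.single (g.1, 0) 1 * (AddMonoidAlgebra.single ((0:ℤ), g.2) 1 - 1) := by
      rw [mul_sub, mul_one, AddMonoidAlgebra.single_mul_single, mul_one, ← e]
    rw [key]
    exact (tpow_dvd g.2).mul_left _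
  | add f g hf hg =>
    have h2 : (f + g) - tau (f + g) = (f - tau f) + (g - tau g) := by rw [map_add]; ring
    rw [h2]; exact dvd_add hf hg
  | smul r f hf =>
    obtain ⟨u, hu⟩ := hf
    refine ⟨r • u, ?_⟩
    rw [map_zsmul, ← smul_sub, hu, mul_smul_comm]

lemma tau_sGen : tau sGen = sGen := by rw [sGen, tau_single]

lemma tau_tGen : tau tGen = 1 := by
  rw [tGen, tau_single, AddMonoidAlgebra.one_def]
  norm_num
  rfl

lemma main_dvd {a b : GroupRingZ2} (h : a * (1 - sGen) + b * (1 - tGen) = 0) :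
    ∃ c, a = c * (1 - tGen) ∧ b = c * (sGen - 1) := by
  have ht : tau a * (1 - sGen) = 0 := by
    have := congrArg tau h
    simpa [map_add, map_mul, map_sub, map_one, tau_sGen, tau_tGen] using this
  have ha0 : tau a = 0 := by
    rcases mul_eq_zero.mp ht with h' | h'
    · exact h'
    · exact absurd h' one_sub_sGen_ne
  obtain ⟨c, hc⟩ : (1 - tGen) ∣ a := by
    have := dvd_sub_tau a
    rwa [ha0, sub_zero] at this
  refine ⟨c, by rw [hc]; ring, ?_⟩
  have hb : (1 - tGen) * (c * (1 - sGen) + b) = 0 := by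
    rw [hc] at h; ring_nf; ring_nf at h; linear_combination h
  rcases mul_eq_zero.mp hb with h' | h'
  · exact absurd h' one_sub_tGen_ne
  · linear_combination h'

lemma rowMap_apply {R : Type*} [CommRing R] {ι : Type*} [Fintype ι] (c : ι → R) (x : ι → R) :
    rowMap c x = ∑ k, x k * c k := rfl

/-- Let `R = ℤ[s,s⁻¹,t,t⁻¹]` and `d₁ : R⁴ → R` with `d₁(b₁) = d₁(b₂) = 1 − s` and
`d₁(b₃) = d₁(b₄) = 1 − t`.  Then `ker d₁` is the free `R`-module with basis
`b₁ − b₂`, `(1 − t)·b₂ + (s − 1)·b₃`, `b₃ − b₄`. -/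
theorem ker_d1_type_F4 :
    LinearMap.ker (rowMap ![1 - sGen, 1 - sGen, 1 - tGen, 1 - tGen]) =
        Submodule.span GroupRingZ2 (Set.range kerBasisF4) ∧
      LinearIndependent GroupRingZ2 kerBasisF4 := by
  constructor
  · apply le_antisymm
    · intro x hx
      rw [LinearMap.mem_ker, rowMap_apply, Fin.sum_univ_four] at hx
      simp only [Matrix.cons_val_zero, Matrix.cons_val_one, Matrix.head_cons,
        Matrix.cons_val_two, Matrix.tail_cons, Matrix.cons_val_three] at hx
      have hx' : (x 0 + x 1) * (1 - sGen) + (x 2 + x 3) * (1 - tGen) = 0 := by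
        linear_combination hx
      obtain ⟨c, hc1, hc2⟩ := main_dvd hx'
      have hxeq : x = x 0 • kerBasisF4 0 + c • kerBasisF4 1 + (-(x 3)) • kerBasisF4 2 := by
        funext i
        fin_cases i <;>
          simp (config := { decide := true }) [kerBasisF4, Pi.single_apply] <;>
          first
            | rfl
            | linear_combination hc1
            | linear_combination hc2
            | linear_combination -hc1
            | linear_combination -hc2
            | ring
      rw [hxeq]
      refine add_mem (add_mem ?_ ?_) ?_ <;>
        exact Submodule.smul_mem _ _ (Submodule.subset_span ⟨_, rfl⟩)
    · rw [Submodule.span_le]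
      rintro _ ⟨i, rfl⟩
      rw [SetLike.mem_coe, LinearMap.mem_ker, rowMap_apply, Fin.sum_univ_four]
      fin_cases i <;>
        simp (config := { decide := true }) [kerBasisF4, Pi.single_apply] <;>
        (try simp [Matrix.vecHead, Matrix.vecTail]) <;> (try ring)
  · rw [Fintype.linearIndependent_iff]
    intro g hg
    rw [Fin.sum_univ_three] at hg
    have h0 := congrFun hg 0
    have h3 := congrFun hg 3
    have h1 := congrFun hg 1
    simp (config := { decide := true }) [kerBasisF4, Pi.single_apply] at h0 h3 h1
    have hg1 : g 1 = 0 := by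
      have hh : g 1 * (1 - tGen) = 0 := by rw [h0] at h1; linear_combination h1
      rcases mul_eq_zero.mp hh with h' | h'
      · exact h'
      · exact absurd h' one_sub_tGen_ne
    intro i
    fin_cases i
    · exact h0
    · exact hg1
    · exact h3
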